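/- Let 𝒢 be a temporal graph with n vertices and lifetime T such that each snapshot has at least one edge, let ω ≥ 0, and fix an integer k ≥ 2. Then the temporal k-modularity satisfies q*_{k,ω}(𝒢) ≥ (1 − 1/k)·q*_ω(𝒢) + n·ω·(T−1)/(2·k·μ_ω(𝒢)). -/

import Mathlib

open Finset
open scoped Classical

namespace TemporalModularity

noncomputable section

variable {V : Type*} [Fintype V] {P : Type*}

/-- Twice the number of edges of `G` with both endpoints in `A`
(the sum over ordered pairs of vertices of `A` of the adjacency indicator). -/
def twoE (G : SimpleGraph V) (A : Finset V) : ℝ :=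
  ∑ u ∈ A, ∑ v ∈ A, if G.Adj u v then (1 : ℝ) else 0

/-- The degree of `v` in `G`, as a real number. -/
def deg (G : SimpleGraph V) (v : V) : ℝ :=
  ∑ u : V, if G.Adj v u then (1 : ℝ) else 0

/-- The number of edges of `G` (half the sum of the degrees), as a real number. -/
def numEdges (G : SimpleGraph V) : ℝ := (∑ v : V, deg G v) / 2

/-- The volume of `A` in `G`: the sum of the degrees of the vertices of `A`. -/
def vol (G : SimpleGraph V) (A : Finset V) : ℝ := ∑ v ∈ A, deg G v

/-- The part with label `p` of the vertex partition induced by the labelling `π`. -/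
def part (π : V → P) (p : P) : Finset V := univ.filter fun v => π v = p

/-- `Σ_{A ∈ 𝒜} (2 e_G(A) − vol_G(A)² / (2m))`, where `𝒜` is the partition of the
vertices induced by the labelling `π` (empty parts contribute zero). -/
def snapTerm (G : SimpleGraph V) (π : V → P) : ℝ :=
  ∑ p ∈ univ.image π,
    (twoE G (part π p) - vol G (part π p) ^ 2 / (2 * numEdges G))

/-- The static modularity `q(G,𝒜) = Σ_{A ∈ 𝒜} (e(A)/m − vol(A)²/(4m²))` of the
partition induced by the labelling `π`. -/
def staticQ (G : SimpleGraph V) (π : V → P) : ℝ :=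
  ∑ p ∈ univ.image π,
    (twoE G (part π p) / (2 * numEdges G) -
      vol G (part π p) ^ 2 / (4 * numEdges G ^ 2))

/-- The maximum static modularity `q*(G)` over all vertex partitions (every partition
of `V` is induced by some labelling `V → V`). -/
def staticQStar (G : SimpleGraph V) : ℝ := ⨆ π : V → V, staticQ G π

/-- The loyalty contribution `L(𝒜)` of the temporal partition `π` with lifetime `T`. -/
def loyalty (T : ℕ) (π : V → ℕ → P) : ℝ :=
  ∑ v : V, ∑ t ∈ Icc 1 (T - 1), if π v t = π v (t + 1) then (1 : ℝ) else 0

/-- The per-time loyalty `L(𝒜,t)` of the temporal partition `π`. -/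
def loyaltyAt (π : V → ℕ → P) (t : ℕ) : ℝ :=
  ∑ v : V, if π v t = π v (t + 1) then (1 : ℝ) else 0

/-- The normalisation factor `μ_ω(𝒢) = ω n (T−1)/2 + Σ_t m_t`. -/
def mu (G : ℕ → SimpleGraph V) (T : ℕ) (ω : ℝ) : ℝ :=
  ω * (Fintype.card V) * ((T : ℝ) - 1) / 2 + ∑ t ∈ Icc 1 T, numEdges (G t)

/-- The non-normalised temporal modularity of the restriction of the temporal graph
`G` to the time interval `[a,b]`, for the partition `π`. -/
def qTildeI (G : ℕ → SimpleGraph V) (a b : ℕ) (ω : ℝ) (π : V → ℕ → P) : ℝ :=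
  (∑ t ∈ Icc a b, snapTerm (G t) fun v => π v t) +
    ω * ∑ v : V, ∑ t ∈ Icc a (b - 1), if π v t = π v (t + 1) then (1 : ℝ) else 0

/-- The non-normalised temporal modularity `q̃_ω(𝒢,𝒜)` of the partition `π` of the
temporal graph `G` with lifetime `T`. -/
def qTilde (G : ℕ → SimpleGraph V) (T : ℕ) (ω : ℝ) (π : V → ℕ → P) : ℝ :=
  qTildeI G 1 T ω π

/-- The temporal modularity `q_ω(𝒢,𝒜)` of the partition `π` of the temporal graph `G`
with lifetime `T`. -/
def qTemp (G : ℕ → SimpleGraph V) (T : ℕ) (ω : ℝ) (π : V → ℕ → P) : ℝ :=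
  qTilde G T ω π / (2 * mu G T ω)

/-- The temporal modularity `q*_ω(𝒢)`: the maximum of `q_ω(𝒢,𝒜)` over all partitions
(every partition of `V × [T]` is induced by some labelling into `ℕ`). -/
def qTempStar (G : ℕ → SimpleGraph V) (T : ℕ) (ω : ℝ) : ℝ :=
  ⨆ π : V → ℕ → ℕ, qTemp G T ω π

/-- The temporal `k`-modularity `q*_{k,ω}(𝒢)`: the maximum of `q_ω(𝒢,𝒜)` over all
partitions into at most `k` parts. -/
def qTempStarK (G : ℕ → SimpleGraph V) (T : ℕ) (ω : ℝ) (k : ℕ) : ℝ :=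
  ⨆ π : V → ℕ → Fin k, qTemp G T ω π

/-- The maximum non-normalised temporal modularity of the restriction of `G` to the
time interval `[a,b]`, over all partitions. -/
def qTildeStarI (G : ℕ → SimpleGraph V) (a b : ℕ) (ω : ℝ) : ℝ :=
  ⨆ π : V → ℕ → ℕ, qTildeI G a b ω π

/-- The non-normalised temporal modularity `q̃*_ω(𝒢)` of the temporal graph `G` with
lifetime `T`. -/
def qTildeStar (G : ℕ → SimpleGraph V) (T : ℕ) (ω : ℝ) : ℝ := qTildeStarI G 1 T ω

/-- The maximum non-normalised temporal modularity of the restriction of `G` to `[a,b]`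
over partitions into at most `c` parts. -/
def qTildeStarKI (G : ℕ → SimpleGraph V) (a b : ℕ) (ω : ℝ) (c : ℕ) : ℝ :=
  ⨆ π : V → ℕ → Fin c, qTildeI G a b ω π

/-- The non-normalised temporal `c`-modularity `q̃*_{c,ω}(𝒢)`. -/
def qTildeStarK (G : ℕ → SimpleGraph V) (T : ℕ) (ω : ℝ) (c : ℕ) : ℝ :=
  qTildeStarKI G 1 T ω c

end


noncomputable section
variable {V : Type*} [Fintype V] {P Q : Type*}

-- my helpers
def wgt (G : SimpleGraph V) (u v : V) : ℝ :=
  (if G.Adj u v then 1 else 0) - deg G u * deg G v / (2 * numEdges G)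

def ind {α : Sort*} (x y : α) : ℝ := if x = y then 1 else 0

lemma ind_def {α : Sort*} (x y : α) [inst : Decidable (x = y)] :
    (@ite ℝ (x = y) inst 1 0) = ind x y := by
  by_cases h : x = y <;> simp [ind, h]

lemma sum_part (π : V → P) (p : P) (f : V → ℝ) :
    ∑ v ∈ part π p, f v = ∑ v, (if π v = p then (1:ℝ) else 0) * f v := by
  rw [part, sum_filter]
  exact Finset.sum_congr rfl fun v _ => by split_ifs <;> simp

lemma snapTerm_pairs' (G : SimpleGraph V) (π : V → P) :
    snapTerm G π = ∑ u, ∑ v, (if π u = π v then (1:ℝ) else 0) * wgt G u v := by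
  have hpart : ∀ p, twoE G (part π p) - vol G (part π p) ^ 2 / (2 * numEdges G)
      = ∑ u, ∑ v, (if π u = p then (1:ℝ) else 0) *
          ((if π v = p then (1:ℝ) else 0) * wgt G u v) := by
    intro p
    have h2 : twoE G (part π p) = ∑ u, ∑ v, (if π u = p then (1:ℝ) else 0) *
        ((if π v = p then (1:ℝ) else 0) * (if G.Adj u v then (1:ℝ) else 0)) := by
      rw [twoE, sum_part]
      refine Finset.sum_congr rfl fun u _ => ?_
      rw [sum_part, Finset.mul_sum]
    have hv : vol G (part π p) = ∑ v, (if π v = p then (1:ℝ) else 0) * deg G v :=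
      sum_part π p _
    rw [h2, hv, sq, Finset.sum_mul_sum]
    rw [Finset.sum_div, ← Finset.sum_sub_distrib]
    refine Finset.sum_congr rfl fun u _ => ?_
    rw [Finset.sum_div, ← Finset.sum_sub_distrib]
    refine Finset.sum_congr rfl fun v _ => ?_
    simp only [wgt]; ring
  rw [snapTerm]
  simp_rw [hpart]
  rw [Finset.sum_comm]
  refine Finset.sum_congr rfl fun u _ => ?_
  rw [Finset.sum_comm]
  refine Finset.sum_congr rfl fun v _ => ?_
  have hmem : π u ∈ univ.image π := Finset.mem_image_of_mem π (mem_univ u)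
  simp only [boole_mul]
  rw [Finset.sum_ite_eq (univ.image π) (π u)
    (fun p => if π v = p then wgt G u v else 0), if_pos hmem]
  split_ifs with h1 h2 h2
  · rfl
  · exact absurd h1.symm h2
  · exact absurd h2.symm h1
  · rfl

lemma snapTerm_pairs (G : SimpleGraph V) (π : V → P) :
    snapTerm G π = ∑ u, ∑ v, ind (π u) (π v) * wgt G u v := by
  rw [snapTerm_pairs']
  simp_rw [ind_def]

lemma sum_adj (G : SimpleGraph V) :
    ∑ u : V, ∑ v : V, (if G.Adj u v then (1:ℝ) else 0) = 2 * numEdges G := by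
  rw [numEdges]; simp only [deg]; ring

lemma sum_wgt (G : SimpleGraph V) (h : numEdges G ≠ 0) :
    ∑ u : V, ∑ v : V, wgt G u v = 0 := by
  have key : ∑ u : V, ∑ v : V, wgt G u v
      = (∑ u : V, ∑ v : V, (if G.Adj u v then (1:ℝ) else 0))
        - (∑ u : V, deg G u) * (∑ v : V, deg G v) / (2 * numEdges G) := by
    rw [Finset.sum_mul_sum, Finset.sum_div, ← Finset.sum_sub_distrib]
    refine Finset.sum_congr rfl fun u _ => ?_
    rw [Finset.sum_div, ← Finset.sum_sub_distrib]
    exact Finset.sum_congr rfl fun v _ => by simp [wgt]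
  have hd : ∑ v : V, deg G v = 2 * numEdges G := by rw [numEdges]; ring
  rw [key, sum_adj, hd]
  field_simp
  ring

lemma snapTerm_congr (G : SimpleGraph V) (π : V → P) (σ : V → Q)
    (h : ∀ u v, (σ u = σ v) ↔ (π u = π v)) :
    snapTerm G σ = snapTerm G π := by
  rw [snapTerm_pairs', snapTerm_pairs']
  refine Finset.sum_congr rfl fun u _ => Finset.sum_congr rfl fun v _ => ?_
  simp only [h u v]


lemma collision' {N k : ℕ} (hk : 0 < k) (a b : Fin N) :
    ∑ g : Fin N → Fin k, (if g a = g b then (1:ℝ) else 0)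
      = (Fintype.card (Fin N → Fin k) : ℝ) * (if a = b then 1 else 1/(k:ℝ)) := by
  rcases eq_or_ne a b with rfl | hab
  · simp [Finset.card_univ]
  · rw [if_neg hab]
    let E : (Fin N → Fin k) ≃ (Fin k × ({j : Fin N // j ≠ b} → Fin k)) :=
      { toFun := fun g => (g b, fun j => g j.1),
        invFun := fun x j => if hj : j = b then x.1 else x.2 ⟨j, hj⟩,
        left_inv := fun g => by
          funext j
          by_cases hj : j = b <;> simp [hj],
        right_inv := fun x => by
          refine Prod.ext ?_ ?_
          · simp
          · funext j
            simp [j.prop] }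
    have hcard : (Fintype.card (Fin N → Fin k) : ℝ)
        = (k : ℝ) * (Fintype.card ({j : Fin N // j ≠ b} → Fin k) : ℝ) := by
      rw [Fintype.card_congr E, Fintype.card_prod, Fintype.card_fin]
      push_cast; ring
    have hsum : ∑ g : Fin N → Fin k, (if g a = g b then (1:ℝ) else 0)
        = (Fintype.card ({j : Fin N // j ≠ b} → Fin k) : ℝ) := by
      rw [← Equiv.sum_comp E.symm]
      have : ∀ x : Fin k × ({j : Fin N // j ≠ b} → Fin k),
          (if (E.symm x) a = (E.symm x) b then (1:ℝ) else 0)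
            = (if x.2 ⟨a, hab⟩ = x.1 then (1:ℝ) else 0) := by
        intro x
        have h1 : (E.symm x) a = x.2 ⟨a, hab⟩ := by
          simp [E, Equiv.coe_fn_symm_mk, dif_neg hab]
        have h2 : (E.symm x) b = x.1 := by
          simp [E, Equiv.coe_fn_symm_mk]
        rw [h1, h2]
      simp_rw [this]
      rw [Fintype.sum_prod_type, Finset.sum_comm]
      simp [Finset.sum_ite_eq, Finset.card_univ]
    rw [hsum, hcard]
    have hk' : (k:ℝ) ≠ 0 := by positivity
    field_simp

lemma collision {N k : ℕ} (hk : 0 < k) (a b : Fin N) :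
    ∑ g : Fin N → Fin k, ind (g a) (g b)
      = (Fintype.card (Fin N → Fin k) : ℝ) * (if a = b then 1 else 1/(k:ℝ)) := by
  rw [← collision' hk a b]
  simp_rw [ind_def]

lemma avg_snap (G : SimpleGraph V) {N k : ℕ} (hk : 0 < k) (hm : numEdges G ≠ 0)
    (σ : V → Fin N) :
    ∑ g : Fin N → Fin k, snapTerm G (fun v => g (σ v))
      = (Fintype.card (Fin N → Fin k) : ℝ) * ((1 - 1/(k:ℝ)) * snapTerm G σ) := by
  simp_rw [snapTerm_pairs]
  have swap : ∑ g : Fin N → Fin k, ∑ u, ∑ v,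
      ind (g (σ u)) (g (σ v)) * wgt G u v
      = ∑ u, ∑ v, ∑ g : Fin N → Fin k, ind (g (σ u)) (g (σ v)) * wgt G u v := by
    rw [Finset.sum_comm]
    exact Finset.sum_congr rfl fun u _ => Finset.sum_comm
  rw [swap]
  have key : ∀ u v : V, ∑ g : Fin N → Fin k, ind (g (σ u)) (g (σ v)) * wgt G u v
      = ((Fintype.card (Fin N → Fin k) : ℝ) * (1 - 1/(k:ℝ))) *
          (ind (σ u) (σ v) * wgt G u v)
        + ((Fintype.card (Fin N → Fin k) : ℝ) * (1/(k:ℝ))) * wgt G u v := by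
    intro u v
    rw [← Finset.sum_mul, collision hk]
    unfold ind
    split_ifs with h <;> ring
  simp_rw [key, Finset.sum_add_distrib, ← Finset.mul_sum]
  rw [sum_wgt G hm, mul_zero, add_zero]
  ring

lemma avg_loy {N k : ℕ} (hk : 0 < k) (a b : Fin N) :
    ∑ g : Fin N → Fin k, ind (g a) (g b)
      = (Fintype.card (Fin N → Fin k) : ℝ) *
          ((1 - 1/(k:ℝ)) * ind a b + 1/(k:ℝ)) := by
  rw [collision hk]
  unfold ind
  split_ifs <;> ring


lemma avg_qTilde (G : ℕ → SimpleGraph V) (T : ℕ) (hT : 1 ≤ T) (ω : ℝ) {N k : ℕ}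
    (hk : 0 < k) (hm : ∀ t ∈ Icc 1 T, numEdges (G t) ≠ 0) (π : V → ℕ → Fin N) :
    ∑ g : Fin N → Fin k, qTilde G T ω (fun v t => g (π v t))
      = (Fintype.card (Fin N → Fin k) : ℝ) *
        ((1 - 1/(k:ℝ)) * qTilde G T ω π
          + ω * (Fintype.card V : ℝ) * ((T:ℝ)-1) / k) := by
  set C := (Fintype.card (Fin N → Fin k) : ℝ) with hCdef
  have h1 : ∑ g : Fin N → Fin k, ∑ t ∈ Icc 1 T, snapTerm (G t) (fun v => g (π v t))
      = C * ((1 - 1/(k:ℝ)) * ∑ t ∈ Icc 1 T, snapTerm (G t) (fun v => π v t)) := by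
    rw [Finset.sum_comm]
    rw [Finset.sum_congr rfl (fun t ht => avg_snap (G t) hk (hm t ht) (fun v => π v t))]
    rw [← Finset.mul_sum, ← Finset.mul_sum]
  have hcard : ((Icc 1 (T-1)).card : ℝ) = (T:ℝ) - 1 := by
    rw [Nat.card_Icc]
    have h : T - 1 + 1 - 1 = T - 1 := by omega
    rw [h, Nat.cast_sub hT, Nat.cast_one]
  have h2 : ∑ g : Fin N → Fin k, ∑ v : V, ∑ t ∈ Icc 1 (T-1),
        ind (g (π v t)) (g (π v (t+1)))
      = C * ((1-1/(k:ℝ)) * ∑ v : V, ∑ t ∈ Icc 1 (T-1), ind (π v t) (π v (t+1))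
           + (Fintype.card V : ℝ) * ((T:ℝ)-1) * (1/(k:ℝ))) := by
    rw [Finset.sum_comm]
    rw [Finset.sum_congr rfl (fun v _ => Finset.sum_comm)]
    rw [Finset.sum_congr rfl (fun v _ => Finset.sum_congr rfl
      (fun t _ => avg_loy hk (π v t) (π v (t+1))))]
    simp_rw [mul_add, Finset.sum_add_distrib, ← Finset.mul_sum]
    rw [Finset.sum_const, Finset.sum_const, Finset.card_univ, nsmul_eq_mul,
      nsmul_eq_mul, hcard]
    ring
  simp only [qTilde, qTildeI]
  simp_rw [ind_def]
  rw [Finset.sum_add_distrib, ← Finset.mul_sum, h1, h2]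
  ring

lemma exists_good (G : ℕ → SimpleGraph V) (T : ℕ) (hT : 1 ≤ T) (ω : ℝ) {k : ℕ}
    (hk : 0 < k) (hm : ∀ t ∈ Icc 1 T, numEdges (G t) ≠ 0) (π : V → ℕ → ℕ) :
    ∃ π' : V → ℕ → Fin k,
      (1 - 1/(k:ℝ)) * qTilde G T ω π
        + ω * (Fintype.card V : ℝ) * ((T:ℝ)-1) / k ≤ qTilde G T ω π' := by
  classical
  set S : Finset ℕ := (univ ×ˢ Icc 1 T).image (fun p : V × ℕ => π p.1 p.2) with hS
  set N : ℕ := S.card + 1 with hN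
  let e := S.equivFin
  let ρ : ℕ → Fin N := fun x =>
    if hx : x ∈ S then (e ⟨x, hx⟩).castSucc else Fin.last S.card
  have hρ : ∀ x ∈ S, ∀ y ∈ S, (ρ x = ρ y ↔ x = y) := by
    intro x hx y hy
    constructor
    · intro h
      simp only [ρ, dif_pos hx, dif_pos hy] at h
      have h' := Fin.castSucc_injective _ h
      have h'' := e.injective h'
      exact Subtype.ext_iff.mp h''
    · intro h; subst h; rfl
  have hmem : ∀ v : V, ∀ t ∈ Icc 1 T, π v t ∈ S := by
    intro v t ht
    rw [hS, Finset.mem_image]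
    exact ⟨(v, t), Finset.mem_product.mpr ⟨mem_univ v, ht⟩, rfl⟩
  set π₂ : V → ℕ → Fin N := fun v t => ρ (π v t) with hπ₂
  have hq : qTilde G T ω π₂ = qTilde G T ω π := by
    rw [qTilde, qTilde, qTildeI, qTildeI]
    congr 1
    · refine Finset.sum_congr rfl fun t ht => ?_
      exact snapTerm_congr (G t) (fun v => π v t) (fun v => π₂ v t)
        (fun u v => hρ _ (hmem u t ht) _ (hmem v t ht))
    · congr 1
      refine Finset.sum_congr rfl fun v _ => Finset.sum_congr rfl fun t ht => ?_
      have h1 : t ∈ Icc 1 T := by rw [mem_Icc] at ht ⊢; omega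
      have h2 : t + 1 ∈ Icc 1 T := by rw [mem_Icc] at ht ⊢; omega
      have hiff := hρ _ (hmem v t h1) _ (hmem v (t+1) h2)
      simp only [hπ₂, hiff]
      split_ifs <;> rfl
  haveI hNE : Nonempty (Fin N → Fin k) := ⟨fun _ => ⟨0, hk⟩⟩
  have havg := avg_qTilde G T hT ω hk hm π₂
  have hsum : ∑ _g : Fin N → Fin k,
      ((1 - 1/(k:ℝ)) * qTilde G T ω π + ω * (Fintype.card V : ℝ) * ((T:ℝ)-1) / k)
      ≤ ∑ g : Fin N → Fin k, qTilde G T ω (fun v t => g (π₂ v t)) := by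
    rw [havg, hq, Finset.sum_const, Finset.card_univ, nsmul_eq_mul]
  obtain ⟨g, _, hg⟩ := Finset.exists_le_of_sum_le univ_nonempty hsum
  exact ⟨fun v t => g (π₂ v t), hg⟩


lemma deg_nonneg (G : SimpleGraph V) (v : V) : 0 ≤ deg G v :=
  Finset.sum_nonneg fun x _ => by positivity

lemma numEdges_nonneg (G : SimpleGraph V) : 0 ≤ numEdges G := by
  rw [numEdges]
  have := Finset.sum_nonneg fun x (_ : x ∈ (univ : Finset V)) => deg_nonneg G x
  linarith

lemma numEdges_pos (G : SimpleGraph V) (h : G.edgeSet.Nonempty) : 0 < numEdges G := by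
  obtain ⟨ed, he⟩ := h
  induction ed using Sym2.ind with
  | _ u v =>
    rw [SimpleGraph.mem_edgeSet] at he
    have h1 : (1:ℝ) ≤ deg G u := by
      rw [deg]
      calc (1:ℝ) = ∑ x ∈ {v}, if G.Adj u x then (1:ℝ) else 0 := by
            rw [Finset.sum_singleton, if_pos he]
      _ ≤ ∑ x : V, if G.Adj u x then (1:ℝ) else 0 :=
        Finset.sum_le_sum_of_subset_of_nonneg (subset_univ _)
          (fun x _ _ => by positivity)
    have h2 : deg G u ≤ ∑ w : V, deg G w :=
      Finset.single_le_sum (fun w _ => deg_nonneg G w) (mem_univ u)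
    rw [numEdges]
    linarith

lemma snapTerm_le (G : SimpleGraph V) (hm : 0 < numEdges G) (π : V → P) :
    snapTerm G π ≤ 2 * numEdges G := by
  rw [snapTerm_pairs', ← sum_adj G]
  refine Finset.sum_le_sum fun u _ => Finset.sum_le_sum fun v _ => ?_
  rw [wgt]
  have hd : 0 ≤ deg G u * deg G v / (2 * numEdges G) := by
    have := deg_nonneg G u
    have := deg_nonneg G v
    positivity
  split_ifs <;> linarith

lemma qTilde_le (G : ℕ → SimpleGraph V) (T : ℕ) (ω : ℝ) (hω : 0 ≤ ω)
    (hm : ∀ t ∈ Icc 1 T, 0 < numEdges (G t)) (π : V → ℕ → P) :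
    qTilde G T ω π ≤ (∑ t ∈ Icc 1 T, 2 * numEdges (G t))
      + ω * ((Fintype.card V : ℝ) * (T : ℝ)) := by
  rw [qTilde, qTildeI]
  have h1 : (∑ t ∈ Icc 1 T, snapTerm (G t) fun v => π v t)
      ≤ ∑ t ∈ Icc 1 T, 2 * numEdges (G t) :=
    Finset.sum_le_sum fun t ht => snapTerm_le (G t) (hm t ht) _
  have h2 : (∑ v : V, ∑ t ∈ Icc 1 (T - 1), if π v t = π v (t + 1) then (1:ℝ) else 0)
      ≤ (Fintype.card V : ℝ) * (T : ℝ) := by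
    calc (∑ v : V, ∑ t ∈ Icc 1 (T - 1), if π v t = π v (t + 1) then (1:ℝ) else 0)
        ≤ ∑ v : V, ∑ t ∈ Icc 1 (T - 1), (1:ℝ) := by
          refine Finset.sum_le_sum fun v _ => Finset.sum_le_sum fun t _ => ?_
          split_ifs <;> norm_num
      _ = (Fintype.card V : ℝ) * ((Icc 1 (T-1)).card : ℝ) := by
          simp [Finset.sum_const, Finset.card_univ, mul_comm]
      _ ≤ (Fintype.card V : ℝ) * (T : ℝ) := by
          have : ((Icc 1 (T-1)).card : ℝ) ≤ (T : ℝ) := by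
            rw [Nat.card_Icc]
            exact_mod_cast Nat.le_of_lt_succ (by omega)
          have hn : (0:ℝ) ≤ (Fintype.card V : ℝ) := Nat.cast_nonneg _
          nlinarith
  nlinarith [mul_le_mul_of_nonneg_left h2 hω]

lemma qTemp_bdd (G : ℕ → SimpleGraph V) (T : ℕ) (ω : ℝ) (hω : 0 ≤ ω)
    (hμ : 0 < mu G T ω) (hm : ∀ t ∈ Icc 1 T, 0 < numEdges (G t)) :
    BddAbove (Set.range fun π : V → ℕ → P => qTemp G T ω π) := by
  refine ⟨((∑ t ∈ Icc 1 T, 2 * numEdges (G t))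
      + ω * ((Fintype.card V : ℝ) * (T : ℝ))) / (2 * mu G T ω), ?_⟩
  rintro x ⟨π, rfl⟩
  simp only [qTemp]
  gcongr
  exact qTilde_le G T ω hω hm π


end

/-- For any temporal graph `𝒢` with `n` vertices and lifetime `T` in
which each snapshot has at least one edge, any `ω ≥ 0` and any integer `k ≥ 2`, the
temporal `k`-modularity satisfies
`q*_{k,ω}(𝒢) ≥ (1 − 1/k)·q*_ω(𝒢) + n ω (T−1)/(2 k μ_ω(𝒢))`. -/
theorem temporal_k_modularity_bound {V : Type*} [Fintype V]
    (T : ℕ) (hT : 1 ≤ T) (G : ℕ → SimpleGraph V)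
    (hE : ∀ t ∈ Icc 1 T, (G t).edgeSet.Nonempty)
    (ω : ℝ) (hω : 0 ≤ ω) (k : ℕ) (hk : 2 ≤ k) :
    (1 - 1 / (k : ℝ)) * qTempStar G T ω +
        (Fintype.card V : ℝ) * ω * ((T : ℝ) - 1) / (2 * (k : ℝ) * mu G T ω) ≤
      qTempStarK G T ω k := by
  classical
  have hn : ∀ t ∈ Icc 1 T, 0 < numEdges (G t) := fun t ht => numEdges_pos _ (hE t ht)
  have hT1 : (1:ℝ) ≤ (T:ℝ) := by exact_mod_cast hT
  have hμ : 0 < mu G T ω := by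
    rw [mu]
    have hs : 0 < ∑ t ∈ Icc 1 T, numEdges (G t) :=
      Finset.sum_pos hn (Finset.nonempty_Icc.mpr hT)
    have h0 : 0 ≤ ω * (Fintype.card V : ℝ) * ((T:ℝ) - 1) / 2 := by
      have hV : (0:ℝ) ≤ (Fintype.card V : ℝ) := Nat.cast_nonneg _
      have h1 : (0:ℝ) ≤ (T:ℝ) - 1 := by linarith
      positivity
    linarith
  have hk0 : 0 < k := by omega
  have hk2 : (2:ℝ) ≤ (k:ℝ) := by exact_mod_cast hk
  have hkR : (0:ℝ) < (k:ℝ) := by linarith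
  have h1k : (0:ℝ) < 1 - 1/(k:ℝ) := by
    have h : 1/(k:ℝ) ≤ 1/2 := by
      apply one_div_le_one_div_of_le <;> linarith
    linarith
  have hkne : (k:ℝ) ≠ 0 := ne_of_gt hkR
  have hμne : mu G T ω ≠ 0 := ne_of_gt hμ
  set c := (Fintype.card V : ℝ) * ω * ((T : ℝ) - 1) / (2 * (k : ℝ) * mu G T ω) with hc
  have key : ∀ π : V → ℕ → ℕ,
      (1 - 1/(k:ℝ)) * qTemp G T ω π + c ≤ qTempStarK G T ω k := by
    intro π
    obtain ⟨π', hπ'⟩ := exists_good G T hT ω hk0 (fun t ht => (hn t ht).ne') π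
    have step1 : (1 - 1/(k:ℝ)) * qTemp G T ω π + c
        = ((1 - 1/(k:ℝ)) * qTilde G T ω π
            + ω * (Fintype.card V : ℝ) * ((T:ℝ)-1) / k) / (2 * mu G T ω) := by
      rw [hc, qTemp]
      field_simp
    have step2 : ((1 - 1/(k:ℝ)) * qTilde G T ω π
        + ω * (Fintype.card V : ℝ) * ((T:ℝ)-1) / k) / (2 * mu G T ω)
        ≤ qTilde G T ω π' / (2 * mu G T ω) := by
      have h2μ : (0:ℝ) < 2 * mu G T ω := by linarith
      exact (div_le_div_iff_of_pos_right h2μ).mpr hπ'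
    have hbridge : qTilde G T ω π' / (2 * mu G T ω) = qTemp G T ω π' := rfl
    have step3 : qTemp G T ω π' ≤ qTempStarK G T ω k := by
      rw [qTempStarK]
      exact le_ciSup (qTemp_bdd G T ω hω hμ hn) π'
    rw [step1]
    exact le_trans step2 (hbridge ▸ step3)
  have hNE : Nonempty (V → ℕ → ℕ) := ⟨fun _ _ => 0⟩
  have hstar : qTempStar G T ω ≤ (qTempStarK G T ω k - c) / (1 - 1/(k:ℝ)) := by
    rw [qTempStar]
    refine ciSup_le fun π => ?_
    rw [le_div_iff₀ h1k]
    linarith [key π]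
  have := (le_div_iff₀ h1k).mp hstar
  linarith

end TemporalModularity
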